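/- Numerical core of Claim 5.2, Case 1 (nef-Fano enlarged-cylinder reduction): Let R > 1 and let χ ∈ M_ℝ satisfy ⟨λ', χ − θ⟩ = −R·D/2 and Q < ⟨λ_0, χ − θ⟩ ≤ η_0/2. Let S ⊆ {1, …, n} be nonempty with ⟨λ', β_i⟩ ≥ 0 for all i ∈ S, and set μ := χ + ∑_{i∈S} β_i. Then: (a) |⟨λ_0, μ − θ⟩| ≤ η_0/2; (b) ⟨λ', μ − θ⟩ ≤ (1 − R/2)·D < R·D/2; (c) if ⟨λ', β_i⟩ > 0 for some i ∈ S, then ⟨λ', μ − θ⟩ > −R·D/2; (d) if ⟨λ', β_i⟩ = 0 for all i ∈ S, then ⟨λ', μ − θ⟩ = −R·D/2 and ⟨λ_0, μ − θ⟩ < ⟨λ_0, χ − θ⟩. -/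
import Mathlib


noncomputable section

/-- The standard pairing between `N_ℝ = ℝ²` and `M_ℝ = ℝ²`. -/
def pairR (lam chi : Fin 2 → ℝ) : ℝ := ∑ k, lam k * chi k

/-- `D := −∑_{i : ⟨λ', β_i⟩ ≤ 0} ⟨λ', β_i⟩`. -/
def Dval {n : ℕ} (β : Fin n → Fin 2 → ℝ) (lam' : Fin 2 → ℝ) : ℝ :=
  -∑ i ∈ Finset.univ.filter (fun i => pairR lam' (β i) ≤ 0), pairR lam' (β i)

/-- `Q := η_0/2 + ∑_{i : ⟨λ', β_i⟩ < 0} ⟨λ_0, β_i⟩`, where `η_0 = −∑_i ⟨λ_0, β_i⟩`. -/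
def Qval {n : ℕ} (β : Fin n → Fin 2 → ℝ) (lam0 lam' : Fin 2 → ℝ) : ℝ :=
  (-∑ i, pairR lam0 (β i)) / 2 +
    ∑ i ∈ Finset.univ.filter (fun i => pairR lam' (β i) < 0), pairR lam0 (β i)

lemma pairR_add (l a b : Fin 2 → ℝ) : pairR l (a + b) = pairR l a + pairR l b := by
  simp [pairR, mul_add, Finset.sum_add_distrib]

lemma pairR_smul (l : Fin 2 → ℝ) (c : ℝ) (x : Fin 2 → ℝ) :
    pairR l (c • x) = c * pairR l x := by
  simp [pairR, Finset.mul_sum, mul_comm, mul_left_comm, mul_add]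

lemma pairR_sum (l : Fin 2 → ℝ) {ι : Type*} (s : Finset ι) (f : ι → Fin 2 → ℝ) :
    pairR l (∑ i ∈ s, f i) = ∑ i ∈ s, pairR l (f i) := by
  simp only [pairR, Finset.sum_apply, Finset.mul_sum]
  rw [Finset.sum_comm]

/-- numerical core of Claim 5.2, Case 1. -/
theorem claim_5_2_case_1 {n : ℕ} (hn : 1 ≤ n)
    (β : Fin n → Fin 2 → ℝ)
    (hβint : ∀ i, ∃ b : Fin 2 → ℤ, β i = fun k => ((b k : ℝ)))
    (hspan : Submodule.span ℝ (Set.range β) = ⊤)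
    (lam0 : Fin 2 → ℝ) (hlam0 : ∀ i, pairR lam0 (β i) < 0)
    (lam' : Fin 2 → ℝ) (hlam'ne : lam' ≠ 0)
    (hlam'ω : pairR lam' (∑ i, β i) = 0)
    (θ : Fin 2 → ℝ)
    (R : ℝ) (hR : 1 < R)
    (χ : Fin 2 → ℝ)
    (hχ1 : pairR lam' (χ - θ) = -(R * Dval β lam' / 2))
    (hχ2 : Qval β lam0 lam' < pairR lam0 (χ - θ))
    (hχ3 : pairR lam0 (χ - θ) ≤ (-∑ i, pairR lam0 (β i)) / 2)
    (S : Finset (Fin n)) (hS : S.Nonempty)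
    (hSnonneg : ∀ i ∈ S, 0 ≤ pairR lam' (β i))
    (μ : Fin 2 → ℝ) (hμ : μ = χ + ∑ i ∈ S, β i) :
    |pairR lam0 (μ - θ)| ≤ (-∑ i, pairR lam0 (β i)) / 2 ∧
      (pairR lam' (μ - θ) ≤ (1 - R / 2) * Dval β lam' ∧
        (1 - R / 2) * Dval β lam' < R * Dval β lam' / 2) ∧
      ((∃ i ∈ S, 0 < pairR lam' (β i)) → -(R * Dval β lam' / 2) < pairR lam' (μ - θ)) ∧
      ((∀ i ∈ S, pairR lam' (β i) = 0) →
        pairR lam' (μ - θ) = -(R * Dval β lam' / 2) ∧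
          pairR lam0 (μ - θ) < pairR lam0 (χ - θ)) := by
  -- abbreviations as equations
  have hμpair : ∀ l : Fin 2 → ℝ,
      pairR l (μ - θ) = pairR l (χ - θ) + ∑ i ∈ S, pairR l (β i) := by
    intro l
    have h1 : μ - θ = (χ - θ) + ∑ i ∈ S, β i := by rw [hμ]; abel
    rw [h1, pairR_add, pairR_sum]
  have hsum0 : ∑ i, pairR lam' (β i) = 0 := by rw [← pairR_sum]; exact hlam'ω
  have hsplit := Finset.sum_filter_add_sum_filter_not Finset.univ
      (fun i => pairR lam' (β i) ≤ 0) (fun i => pairR lam' (β i))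
  have hDalt : Dval β lam'
      = ∑ i ∈ Finset.univ.filter (fun i => ¬ pairR lam' (β i) ≤ 0), pairR lam' (β i) := by
    unfold Dval; rw [hsum0] at hsplit; linarith
  -- some weight pairs nonzero with lam'
  have hex : ∃ i, pairR lam' (β i) ≠ 0 := by
    by_contra h
    push_neg at h
    apply hlam'ne
    let L : (Fin 2 → ℝ) →ₗ[ℝ] ℝ :=
      { toFun := pairR lam'
        map_add' := pairR_add lam'
        map_smul' := fun c x => pairR_smul lam' c x }
    have hker : Submodule.span ℝ (Set.range β) ≤ LinearMap.ker L := by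
      rw [Submodule.span_le]
      rintro x ⟨i, rfl⟩
      exact h i
    rw [hspan, top_le_iff] at hker
    funext k
    have : pairR lam' (Pi.single k 1) = 0 :=
      LinearMap.mem_ker.mp (hker.ge Submodule.mem_top)
    fin_cases k <;> simpa [pairR, Fin.sum_univ_two, Pi.single_apply] using this
  have hDpos : 0 < Dval β lam' := by
    obtain ⟨i₀, hi₀⟩ := hex
    rcases lt_or_gt_of_ne hi₀ with hneg | hpos
    · unfold Dval
      have hmem : i₀ ∈ Finset.univ.filter (fun i => pairR lam' (β i) ≤ 0) := by
        simp [hneg.le]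
      have herase := Finset.add_sum_erase _ (fun i => pairR lam' (β i)) hmem
      have hrest : ∑ i ∈ (Finset.univ.filter (fun i => pairR lam' (β i) ≤ 0)).erase i₀,
          pairR lam' (β i) ≤ 0 :=
        Finset.sum_nonpos fun i hi =>
          (Finset.mem_filter.mp (Finset.mem_of_mem_erase hi)).2
      linarith
    · rw [hDalt]
      have hmem : i₀ ∈ Finset.univ.filter (fun i => ¬ pairR lam' (β i) ≤ 0) := by
        simp only [Finset.mem_filter, Finset.mem_univ, true_and, not_le]
        exact hpos
      exact lt_of_lt_of_le hpos
        (Finset.single_le_sum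
          (fun i hi => le_of_lt (not_le.mp (Finset.mem_filter.mp hi).2)) hmem)
  -- ∑_{i∈S} ⟨λ', β_i⟩ ≤ D
  have hSD : ∑ i ∈ S, pairR lam' (β i) ≤ Dval β lam' := by
    rw [hDalt]
    have heq : ∑ i ∈ S.filter (fun i => ¬ pairR lam' (β i) ≤ 0), pairR lam' (β i)
        = ∑ i ∈ S, pairR lam' (β i) :=
      Finset.sum_filter_of_ne fun i hi hne =>
        not_le.mpr (lt_of_le_of_ne (hSnonneg i hi) (Ne.symm hne))
    rw [← heq]
    refine Finset.sum_le_sum_of_subset_of_nonneg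
      (Finset.filter_subset_filter _ (Finset.subset_univ S)) ?_
    intro i hi _
    exact le_of_lt (not_le.mp (Finset.mem_filter.mp hi).2)
  -- ∑_{i∈S} ⟨λ_0, β_i⟩ < 0
  have hSq : ∑ i ∈ S, pairR lam0 (β i) < 0 :=
    Finset.sum_neg (fun i _ => hlam0 i) hS
  -- lower bound using Q
  have hF : ∑ i ∈ S, pairR lam0 (β i)
      + ∑ i ∈ Finset.univ.filter (fun i => pairR lam' (β i) < 0), pairR lam0 (β i)
      ≥ ∑ i, pairR lam0 (β i) := by
    set F := Finset.univ.filter (fun i => pairR lam' (β i) < 0) with hFdef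
    have hdisj : Disjoint S F := by
      rw [Finset.disjoint_left]
      intro i hiS hiF
      exact absurd (Finset.mem_filter.mp hiF).2 (not_lt.mpr (hSnonneg i hiS))
    have hu : ∑ i ∈ S ∪ F, pairR lam0 (β i)
        = ∑ i ∈ S, pairR lam0 (β i) + ∑ i ∈ F, pairR lam0 (β i) :=
      Finset.sum_union hdisj
    have hc := Finset.sum_add_sum_compl (S ∪ F) (fun i => pairR lam0 (β i))
    have hcn : ∑ i ∈ (S ∪ F)ᶜ, pairR lam0 (β i) ≤ 0 :=
      Finset.sum_nonpos fun i _ => (hlam0 i).le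
    linarith
  have hQ : Qval β lam0 lam' = (-∑ i, pairR lam0 (β i)) / 2
      + ∑ i ∈ Finset.univ.filter (fun i => pairR lam' (β i) < 0), pairR lam0 (β i) := rfl
  rw [hQ] at hχ2
  refine ⟨?_, ⟨?_, ?_⟩, ?_, ?_⟩
  · rw [abs_le, hμpair]
    constructor <;> linarith
  · rw [hμpair, hχ1]
    nlinarith
  · nlinarith
  · rintro ⟨i, hiS, hipos⟩
    rw [hμpair, hχ1]
    have : 0 < ∑ i ∈ S, pairR lam' (β i) :=
      Finset.sum_pos' hSnonneg ⟨i, hiS, hipos⟩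
    linarith
  · intro hz
    have h0 : ∑ i ∈ S, pairR lam' (β i) = 0 := Finset.sum_eq_zero hz
    constructor
    · rw [hμpair, hχ1, h0]; ring
    · rw [hμpair]; linarith
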